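/- (Corollary 1) The function ρ_ω defined by ρ_ω(μ₁, μ₂) = min{ diam X, H(μ₁, μ₂) } is a metric on the set I_ω(X) of finitely supported idempotent probability measures on X. -/

import Mathlib

open Filter Topology
open scoped Classical

variable {X : Type*}

/-- An idempotent probability measure on a topological space `X`:
a functional on `C(X, ℝ)` preserving constants, shifting by constants,
and turning pointwise max into max. -/
def IsIPM [TopologicalSpace X] (μ : C(X, ℝ) → ℝ) : Prop :=
  (∀ c : ℝ, μ (ContinuousMap.const X c) = c) ∧
  (∀ (φ : C(X, ℝ)) (c : ℝ), μ (φ + ContinuousMap.const X c) = μ φ + c) ∧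
  (∀ φ ψ : C(X, ℝ), μ (φ ⊔ ψ) = max (μ φ) (μ ψ))

/-- `μ` is represented as `μ(φ) = max_i (λ i + φ (x i))` with `x` pairwise distinct
and `max_i λ i = 0`. -/
def IsRepr [TopologicalSpace X] (μ : C(X, ℝ) → ℝ) {n : ℕ}
    (x : Fin n → X) (lam : Fin n → ℝ) : Prop :=
  0 < n ∧ Function.Injective x ∧ (⨆ i, lam i) = 0 ∧
    ∀ φ : C(X, ℝ), μ φ = ⨆ i, (lam i + φ (x i))

/-- A finitely supported idempotent probability measure. -/
def IsFinSuppIPM [TopologicalSpace X] (μ : C(X, ℝ) → ℝ) : Prop :=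
  ∃ (n : ℕ) (x : Fin n → X) (lam : Fin n → ℝ), IsRepr μ x lam

/-- `ξ` is a coupling of `μ1` and `μ2`: an idempotent probability measure on `X × X`
whose marginals are `μ1` and `μ2`. -/
def IsCoupling [TopologicalSpace X] (μ1 μ2 : C(X, ℝ) → ℝ)
    (ξ : C(X × X, ℝ) → ℝ) : Prop :=
  IsIPM ξ ∧
  (∀ φ : C(X, ℝ), ξ (φ.comp ContinuousMap.fst) = μ1 φ) ∧
  (∀ φ : C(X, ℝ), ξ (φ.comp ContinuousMap.snd) = μ2 φ)

/-- A coupling matrix for weight vectors `lam1`, `lam2`: entries in `ℝ ∪ {−∞}`,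
with row maxima `lam1` and column maxima `lam2`. -/
def IsCouplingMatrix {n1 n2 : ℕ} (lam1 : Fin n1 → ℝ) (lam2 : Fin n2 → ℝ)
    (γ : Fin n1 → Fin n2 → WithBot ℝ) : Prop :=
  (∀ j, (Finset.univ.sup fun k => γ j k) = (lam1 j : WithBot ℝ)) ∧
  (∀ k, (Finset.univ.sup fun j => γ j k) = (lam2 k : WithBot ℝ))

/-- The cost `max{ |λ_{2k} − λ_{1j}| + ρ(x_{1j}, x_{2k}) : γ_{jk} ≠ −∞ }`. -/
noncomputable def matCost [MetricSpace X] {n1 n2 : ℕ}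
    (x1 : Fin n1 → X) (lam1 : Fin n1 → ℝ) (x2 : Fin n2 → X) (lam2 : Fin n2 → ℝ)
    (γ : Fin n1 → Fin n2 → WithBot ℝ) : ℝ :=
  sSup {c : ℝ | ∃ j k, γ j k ≠ ⊥ ∧ c = |lam2 k - lam1 j| + dist (x1 j) (x2 k)}

/-- `H(μ1, μ2)`: the infimum of costs over all coupling matrices
(for all representations of `μ1`, `μ2`; the representation is unique). -/
noncomputable def Hdist [MetricSpace X] (μ1 μ2 : C(X, ℝ) → ℝ) : ℝ :=
  sInf {c : ℝ | ∃ (n1 n2 : ℕ) (x1 : Fin n1 → X) (lam1 : Fin n1 → ℝ)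
      (x2 : Fin n2 → X) (lam2 : Fin n2 → ℝ) (γ : Fin n1 → Fin n2 → WithBot ℝ),
      IsRepr μ1 x1 lam1 ∧ IsRepr μ2 x2 lam2 ∧ IsCouplingMatrix lam1 lam2 γ ∧
      c = matCost x1 lam1 x2 lam2 γ}

/-- `ρ_ω(μ1, μ2) = min{diam X, H(μ1, μ2)}`. -/
noncomputable def rhoOmega [MetricSpace X] (μ1 μ2 : C(X, ℝ) → ℝ) : ℝ :=
  min (Metric.diam (Set.univ : Set X)) (Hdist μ1 μ2)

/-! ### Auxiliary lemmas -/

section RealSup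

lemma ciSup_add_const {n : ℕ} (hn : 0 < n) (f : Fin n → ℝ) (c : ℝ) :
    (⨆ i, (f i + c)) = (⨆ i, f i) + c := by
  haveI : Nonempty (Fin n) := ⟨⟨0, hn⟩⟩
  apply le_antisymm
  · exact ciSup_le fun i =>
      add_le_add_left (le_ciSup (Set.Finite.bddAbove (Set.finite_range f)) i) c
  · have h2 : (⨆ i, f i) ≤ (⨆ i, (f i + c)) - c :=
      ciSup_le fun i => le_sub_iff_add_le.mpr
        (le_ciSup (Set.Finite.bddAbove (Set.finite_range fun i => f i + c)) i)
    linarith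

lemma sup'_univ_eq_ciSup {n : ℕ} [Nonempty (Fin n)] (f : Fin n → ℝ) :
    Finset.univ.sup' Finset.univ_nonempty f = ⨆ i, f i :=
  le_antisymm
    (Finset.sup'_le _ _ fun i _ => le_ciSup (Set.Finite.bddAbove (Set.finite_range f)) i)
    (ciSup_le fun i => Finset.le_sup' f (Finset.mem_univ i))

end RealSup

section WithBotSup

lemma withBot_sup_add {ι : Type*} (s : Finset ι) (f : ι → WithBot ℝ) (c : WithBot ℝ) :
    s.sup (fun i => f i + c) = s.sup f + c := by
  have := Finset.comp_sup_eq_sup_comp (s := s) (f := f) (fun z : WithBot ℝ => z + c)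
    (fun x y => (max_add_add_right x y c).symm) (WithBot.bot_add c)
  exact this.symm

lemma withBot_add_sup {ι : Type*} (s : Finset ι) (f : ι → WithBot ℝ) (c : WithBot ℝ) :
    s.sup (fun i => c + f i) = c + s.sup f := by
  have := Finset.comp_sup_eq_sup_comp (s := s) (f := f) (fun z : WithBot ℝ => c + z)
    (fun x y => (max_add_add_left c x y).symm) (WithBot.add_bot c)
  exact this.symm

lemma withBot_sup_equiv {α β : Type*} [Fintype α] [Fintype β] (σ : α ≃ β)
    (f : β → WithBot ℝ) :
    Finset.univ.sup (fun a => f (σ a)) = Finset.univ.sup f := by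
  apply le_antisymm
  · exact Finset.sup_le fun a _ => Finset.le_sup (Finset.mem_univ (σ a))
  · refine Finset.sup_le fun b _ => ?_
    simpa using Finset.le_sup (f := fun a => f (σ a)) (Finset.mem_univ (σ.symm b))

end WithBotSup

section Repr

variable [MetricSpace X]

lemma IsRepr.lam_le {μ : C(X, ℝ) → ℝ} {n : ℕ} {x : Fin n → X} {lam : Fin n → ℝ}
    (h : IsRepr μ x lam) (i : Fin n) : lam i ≤ 0 := by
  rw [← h.2.2.1]
  exact le_ciSup (Set.Finite.bddAbove (Set.finite_range lam)) i

/-- The bump function `y ↦ -(K * dist y p)`. -/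
noncomputable def bump (p : X) (K : ℝ) : C(X, ℝ) :=
  ⟨fun y => -(K * dist y p), by fun_prop⟩

lemma IsRepr.mem_range {μ : C(X, ℝ) → ℝ} {n n' : ℕ} {x : Fin n → X} {lam : Fin n → ℝ}
    {x' : Fin n' → X} {lam' : Fin n' → ℝ}
    (h : IsRepr μ x lam) (h' : IsRepr μ x' lam') (i : Fin n) : x i ∈ Set.range x' := by
  by_contra hc
  haveI : Nonempty (Fin n') := ⟨⟨0, h'.1⟩⟩
  set p := x i with hp
  have hd : ∀ k, 0 < dist (x' k) p := fun k => dist_pos.mpr fun he => hc ⟨k, he⟩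
  obtain ⟨k0, -, hk0⟩ := Finset.exists_mem_eq_inf' (Finset.univ_nonempty (α := Fin n'))
    (fun k => dist (x' k) p)
  set d := Finset.univ.inf' Finset.univ_nonempty (fun k => dist (x' k) p) with hdd
  have hdpos : 0 < d := hk0 ▸ hd k0
  set K := (|lam i| + 1) / d with hKdef
  have hK : 0 ≤ K := div_nonneg (by positivity) hdpos.le
  have h1 : lam i + (bump p K) (x i) ≤ μ (bump p K) := by
    rw [h.2.2.2]
    exact le_ciSup (Set.Finite.bddAbove (Set.finite_range fun j => lam j + (bump p K) (x j))) i
  have hb : (bump p K) (x i) = 0 := by simp [bump, ← hp]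
  rw [hb, add_zero] at h1
  have h2 : μ (bump p K) ≤ -(K * d) := by
    rw [h'.2.2.2]
    apply ciSup_le
    intro k
    have hdk : d ≤ dist (x' k) p := Finset.inf'_le _ (Finset.mem_univ k)
    have hl := h'.lam_le k
    have : (bump p K) (x' k) = -(K * dist (x' k) p) := rfl
    rw [this]
    nlinarith
  have hKd : K * d = |lam i| + 1 := div_mul_cancel₀ _ hdpos.ne'
  have := le_trans h1 h2
  rw [hKd] at this
  have := neg_abs_le (lam i)
  linarith

lemma IsRepr.lam_le_lam {μ : C(X, ℝ) → ℝ} {n n' : ℕ} {x : Fin n → X} {lam : Fin n → ℝ}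
    {x' : Fin n' → X} {lam' : Fin n' → ℝ}
    (h : IsRepr μ x lam) (h' : IsRepr μ x' lam') {i : Fin n} {k : Fin n'}
    (he : x' k = x i) : lam i ≤ lam' k := by
  haveI : Nonempty (Fin n') := ⟨⟨0, h'.1⟩⟩
  set p := x i with hp
  set K := (Finset.univ.sup' Finset.univ_nonempty
      fun j => if x' j = p then (0 : ℝ) else (lam' j - lam' k) / dist (x' j) p) ⊔ 0 with hKdef
  have hK0 : 0 ≤ K := le_max_right _ _
  have hterm : ∀ j, lam' j + (bump p K) (x' j) ≤ lam' k := by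
    intro j
    have hbj : (bump p K) (x' j) = -(K * dist (x' j) p) := rfl
    rw [hbj]
    by_cases hj : x' j = p
    · have : j = k := h'.2.1 (by rw [hj, he])
      subst this
      simp [hj]
    · have hdj : 0 < dist (x' j) p := dist_pos.mpr hj
      have h1 : (lam' j - lam' k) / dist (x' j) p ≤ K := by
        refine le_trans ?_ (le_max_left _ _)
        have := Finset.le_sup' (f := fun j => if x' j = p then (0 : ℝ)
          else (lam' j - lam' k) / dist (x' j) p) (Finset.mem_univ j)
        simp only [hj, if_false] at this
        exact this
      have h2 : lam' j - lam' k ≤ K * dist (x' j) p := (div_le_iff₀ hdj).mp h1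
      linarith
  have h1 : lam i ≤ μ (bump p K) := by
    have h1' : lam i + (bump p K) (x i) ≤ μ (bump p K) := by
      rw [h.2.2.2]
      exact le_ciSup (Set.Finite.bddAbove (Set.finite_range fun j => lam j + (bump p K) (x j))) i
    have hb : (bump p K) (x i) = 0 := by simp [bump, ← hp]
    rwa [hb, add_zero] at h1'
  have h2 : μ (bump p K) ≤ lam' k := by
    rw [h'.2.2.2]
    exact ciSup_le hterm
  linarith

lemma IsRepr.exists_equiv {μ : C(X, ℝ) → ℝ} {n n' : ℕ} {x : Fin n → X} {lam : Fin n → ℝ}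
    {x' : Fin n' → X} {lam' : Fin n' → ℝ}
    (h : IsRepr μ x lam) (h' : IsRepr μ x' lam') :
    ∃ σ : Fin n ≃ Fin n', (∀ i, x' (σ i) = x i) ∧ (∀ i, lam' (σ i) = lam i) := by
  have hmem : ∀ i, ∃ k, x' k = x i := fun i => h.mem_range h' i
  choose e he using hmem
  have hinj : Function.Injective e := fun a b hab => h.2.1 (by rw [← he a, ← he b, hab])
  have hsurj : Function.Surjective e := by
    intro k
    obtain ⟨i, hi⟩ := h'.mem_range h k
    exact ⟨i, h'.2.1 (by rw [he i, ← hi])⟩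
  refine ⟨Equiv.ofBijective e ⟨hinj, hsurj⟩, fun i => he i, fun i => ?_⟩
  exact le_antisymm (h'.lam_le_lam h (he i).symm) (h.lam_le_lam h' (he i))

end Repr

section Matrices

lemma bddAbove_costSet {n1 n2 : ℕ} (P : Fin n1 → Fin n2 → Prop) (f : Fin n1 → Fin n2 → ℝ) :
    BddAbove {c : ℝ | ∃ j k, P j k ∧ c = f j k} := by
  apply Set.Finite.bddAbove
  apply Set.Finite.subset (Set.finite_range fun p : Fin n1 × Fin n2 => f p.1 p.2)
  rintro c ⟨j, k, -, rfl⟩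
  exact ⟨(j, k), rfl⟩

lemma IsCouplingMatrix.exists_ne_bot_row {n1 n2 : ℕ} {lam1 : Fin n1 → ℝ} {lam2 : Fin n2 → ℝ}
    {γ : Fin n1 → Fin n2 → WithBot ℝ} (h : IsCouplingMatrix lam1 lam2 γ) (j : Fin n1) :
    ∃ k, γ j k ≠ ⊥ := by
  by_contra hc
  push_neg at hc
  have hb : (Finset.univ.sup fun k => γ j k) = ⊥ :=
    (Finset.sup_eq_bot_iff _ _).mpr fun k _ => hc k
  rw [h.1 j] at hb
  exact WithBot.coe_ne_bot hb

lemma IsCouplingMatrix.exists_ne_bot_col {n1 n2 : ℕ} {lam1 : Fin n1 → ℝ} {lam2 : Fin n2 → ℝ}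
    {γ : Fin n1 → Fin n2 → WithBot ℝ} (h : IsCouplingMatrix lam1 lam2 γ) (k : Fin n2) :
    ∃ j, γ j k ≠ ⊥ := by
  by_contra hc
  push_neg at hc
  have hb : (Finset.univ.sup fun j => γ j k) = ⊥ :=
    (Finset.sup_eq_bot_iff _ _).mpr fun j _ => hc j
  rw [h.2 k] at hb
  exact WithBot.coe_ne_bot hb

variable [MetricSpace X]

lemma cost_le_matCost {n1 n2 : ℕ} (x1 : Fin n1 → X) (lam1 : Fin n1 → ℝ)
    (x2 : Fin n2 → X) (lam2 : Fin n2 → ℝ) (γ : Fin n1 → Fin n2 → WithBot ℝ)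
    {j : Fin n1} {k : Fin n2} (h : γ j k ≠ ⊥) :
    |lam2 k - lam1 j| + dist (x1 j) (x2 k) ≤ matCost x1 lam1 x2 lam2 γ :=
  le_csSup (bddAbove_costSet _ _) ⟨j, k, h, rfl⟩

lemma matCost_nonneg {n1 n2 : ℕ} {x1 : Fin n1 → X} {lam1 : Fin n1 → ℝ}
    {x2 : Fin n2 → X} {lam2 : Fin n2 → ℝ} {γ : Fin n1 → Fin n2 → WithBot ℝ}
    (h : IsCouplingMatrix lam1 lam2 γ) (hn1 : 0 < n1) :
    0 ≤ matCost x1 lam1 x2 lam2 γ := by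
  obtain ⟨k, hk⟩ := h.exists_ne_bot_row ⟨0, hn1⟩
  have h1 := cost_le_matCost x1 lam1 x2 lam2 γ hk
  have h2 : (0 : ℝ) ≤ |lam2 k - lam1 ⟨0, hn1⟩| + dist (x1 ⟨0, hn1⟩) (x2 k) := by positivity
  linarith

lemma isCouplingMatrix_prod {n1 n2 : ℕ} (hn1 : 0 < n1) (hn2 : 0 < n2)
    {lam1 : Fin n1 → ℝ} {lam2 : Fin n2 → ℝ}
    (h1 : (⨆ j, lam1 j) = 0) (h2 : (⨆ k, lam2 k) = 0) :
    IsCouplingMatrix lam1 lam2 (fun j k => ((lam1 j + lam2 k : ℝ) : WithBot ℝ)) := by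
  haveI : Nonempty (Fin n1) := ⟨⟨0, hn1⟩⟩
  haveI : Nonempty (Fin n2) := ⟨⟨0, hn2⟩⟩
  constructor
  · intro j
    have hc : (Finset.univ.sup fun k => ((lam1 j + lam2 k : ℝ) : WithBot ℝ))
        = ((Finset.univ.sup' Finset.univ_nonempty fun k => lam1 j + lam2 k : ℝ) : WithBot ℝ) :=
      (Finset.coe_sup' _ _).symm
    rw [hc]
    norm_cast
    rw [sup'_univ_eq_ciSup]
    have : ∀ k, lam1 j + lam2 k = lam2 k + lam1 j := fun k => add_comm _ _
    simp only [this]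
    rw [ciSup_add_const hn2, h2, zero_add]
  · intro k
    have hc : (Finset.univ.sup fun j => ((lam1 j + lam2 k : ℝ) : WithBot ℝ))
        = ((Finset.univ.sup' Finset.univ_nonempty fun j => lam1 j + lam2 k : ℝ) : WithBot ℝ) :=
      (Finset.coe_sup' _ _).symm
    rw [hc]
    norm_cast
    rw [sup'_univ_eq_ciSup, ciSup_add_const hn1, h1, zero_add]

lemma isCouplingMatrix_diag {n : ℕ} (lam : Fin n → ℝ) :
    IsCouplingMatrix lam lam
      (fun j k => if j = k then (lam j : WithBot ℝ) else ⊥) := by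
  constructor
  · intro j
    apply le_antisymm
    · apply Finset.sup_le
      intro k _
      by_cases h : j = k <;> simp [h]
    · have := Finset.le_sup (f := fun k => if j = k then (lam j : WithBot ℝ) else ⊥)
        (Finset.mem_univ j)
      simpa using this
  · intro k
    apply le_antisymm
    · apply Finset.sup_le
      intro j _
      by_cases h : j = k
      · subst h; simp
      · simp [h]
    · have := Finset.le_sup (f := fun j => if j = k then (lam j : WithBot ℝ) else ⊥)
        (Finset.mem_univ k)
      simpa using this

lemma matCost_diag {n : ℕ} (hn : 0 < n) (x : Fin n → X) (lam : Fin n → ℝ) :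
    matCost x lam x lam (fun j k => if j = k then (lam j : WithBot ℝ) else ⊥) = 0 := by
  unfold matCost
  have hset : {c : ℝ | ∃ j k, (if j = k then (lam j : WithBot ℝ) else ⊥) ≠ ⊥ ∧
      c = |lam k - lam j| + dist (x j) (x k)} = {0} := by
    ext c
    simp only [Set.mem_setOf_eq, Set.mem_singleton_iff]
    constructor
    · rintro ⟨j, k, hne, rfl⟩
      by_cases h : j = k
      · subst h; simp
      · simp [h] at hne
    · rintro rfl
      exact ⟨⟨0, hn⟩, ⟨0, hn⟩, by simp, by simp⟩
  rw [hset, csSup_singleton]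

lemma matCost_transpose {n1 n2 : ℕ} (x1 : Fin n1 → X) (lam1 : Fin n1 → ℝ)
    (x2 : Fin n2 → X) (lam2 : Fin n2 → ℝ) (γ : Fin n1 → Fin n2 → WithBot ℝ) :
    matCost x2 lam2 x1 lam1 (fun k j => γ j k) = matCost x1 lam1 x2 lam2 γ := by
  unfold matCost
  congr 1
  ext c
  simp only [Set.mem_setOf_eq]
  constructor
  · rintro ⟨k, j, hne, rfl⟩
    exact ⟨j, k, hne, by rw [abs_sub_comm, dist_comm]⟩
  · rintro ⟨j, k, hne, rfl⟩
    exact ⟨k, j, hne, by rw [abs_sub_comm, dist_comm]⟩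

end Matrices

section Comp

/-- Tropical composition of coupling matrices through a reindexing `σ` of the middle space. -/
noncomputable def compMat {n1 n2 n2' n3 : ℕ} (σ : Fin n2 ≃ Fin n2') (lam2 : Fin n2 → ℝ)
    (γ12 : Fin n1 → Fin n2 → WithBot ℝ) (γ23 : Fin n2' → Fin n3 → WithBot ℝ) :
    Fin n1 → Fin n3 → WithBot ℝ :=
  fun j l => Finset.univ.sup fun k => γ12 j k + γ23 (σ k) l + ((-(lam2 k) : ℝ) : WithBot ℝ)

lemma compMat_isCouplingMatrix {n1 n2 n2' n3 : ℕ}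
    {lam1 : Fin n1 → ℝ} {lam2 : Fin n2 → ℝ} {lam2' : Fin n2' → ℝ} {lam3 : Fin n3 → ℝ}
    (σ : Fin n2 ≃ Fin n2') (hl : ∀ k, lam2' (σ k) = lam2 k)
    {γ12 : Fin n1 → Fin n2 → WithBot ℝ} {γ23 : Fin n2' → Fin n3 → WithBot ℝ}
    (h12 : IsCouplingMatrix lam1 lam2 γ12) (h23 : IsCouplingMatrix lam2' lam3 γ23) :
    IsCouplingMatrix lam1 lam3 (compMat σ lam2 γ12 γ23) := by
  constructor
  · intro j
    unfold compMat
    rw [Finset.sup_comm]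
    have hinner : ∀ k : Fin n2,
        (Finset.univ.sup fun l => γ12 j k + γ23 (σ k) l + ((-(lam2 k) : ℝ) : WithBot ℝ))
          = γ12 j k := by
      intro k
      rw [withBot_sup_add]
      have : (Finset.univ.sup fun l => γ12 j k + γ23 (σ k) l)
          = γ12 j k + Finset.univ.sup fun l => γ23 (σ k) l := withBot_add_sup _ _ _
      rw [this, h23.1 (σ k), hl k, add_assoc]
      norm_cast
      simp
    simp only [hinner]
    exact h12.1 j
  · intro l
    unfold compMat
    rw [Finset.sup_comm]
    have hinner : ∀ k : Fin n2,
        (Finset.univ.sup fun j => γ12 j k + γ23 (σ k) l + ((-(lam2 k) : ℝ) : WithBot ℝ))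
          = γ23 (σ k) l := by
      intro k
      have heq : ∀ j : Fin n1, γ12 j k + γ23 (σ k) l + ((-(lam2 k) : ℝ) : WithBot ℝ)
          = γ12 j k + (γ23 (σ k) l + ((-(lam2 k) : ℝ) : WithBot ℝ)) := fun j => add_assoc _ _ _
      simp only [heq]
      have : (Finset.univ.sup fun j => γ12 j k + (γ23 (σ k) l + ((-(lam2 k) : ℝ) : WithBot ℝ)))
          = (Finset.univ.sup fun j => γ12 j k) + (γ23 (σ k) l + ((-(lam2 k) : ℝ) : WithBot ℝ)) := by
        have := withBot_sup_add (Finset.univ : Finset (Fin n1)) (fun j => γ12 j k)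
          (γ23 (σ k) l + ((-(lam2 k) : ℝ) : WithBot ℝ))
        simpa [add_comm] using this
      rw [this, h12.2 k]
      have : ((lam2 k : ℝ) : WithBot ℝ) + (γ23 (σ k) l + ((-(lam2 k) : ℝ) : WithBot ℝ))
          = γ23 (σ k) l + (((lam2 k : ℝ) : WithBot ℝ) + ((-(lam2 k) : ℝ) : WithBot ℝ)) :=
        add_left_comm _ _ _
      rw [this]
      norm_cast
      simp
    simp only [hinner]
    have := withBot_sup_equiv σ (fun k' => γ23 k' l)
    rw [this, h23.2 l]

variable [MetricSpace X]

lemma compMat_cost {n1 n2 n2' n3 : ℕ}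
    {x1 : Fin n1 → X} {x2 : Fin n2 → X} {x2' : Fin n2' → X} {x3 : Fin n3 → X}
    {lam1 : Fin n1 → ℝ} {lam2 : Fin n2 → ℝ} {lam2' : Fin n2' → ℝ} {lam3 : Fin n3 → ℝ}
    (σ : Fin n2 ≃ Fin n2') (hx : ∀ k, x2' (σ k) = x2 k) (hl : ∀ k, lam2' (σ k) = lam2 k)
    {γ12 : Fin n1 → Fin n2 → WithBot ℝ} {γ23 : Fin n2' → Fin n3 → WithBot ℝ}
    (h12 : IsCouplingMatrix lam1 lam2 γ12) (h23 : IsCouplingMatrix lam2' lam3 γ23)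
    (hn1 : 0 < n1) (hn2' : 0 < n2') :
    matCost x1 lam1 x3 lam3 (compMat σ lam2 γ12 γ23)
      ≤ matCost x1 lam1 x2 lam2 γ12 + matCost x2' lam2' x3 lam3 γ23 := by
  apply Real.sSup_le
  · rintro c ⟨j, l, hne, rfl⟩
    have hex : ∃ k, γ12 j k + γ23 (σ k) l + ((-(lam2 k) : ℝ) : WithBot ℝ) ≠ ⊥ := by
      by_contra hc
      push_neg at hc
      exact hne ((Finset.sup_eq_bot_iff _ _).mpr fun k _ => hc k)
    obtain ⟨k, hk⟩ := hex
    have hk12 : γ12 j k ≠ ⊥ := by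
      intro hb
      exact hk (by simp [WithBot.add_eq_bot, hb])
    have hk23 : γ23 (σ k) l ≠ ⊥ := by
      intro hb
      exact hk (by simp [WithBot.add_eq_bot, hb])
    have e1 := cost_le_matCost x1 lam1 x2 lam2 γ12 hk12
    have e2 := cost_le_matCost x2' lam2' x3 lam3 γ23 hk23
    rw [hx k, hl k] at e2
    have t1 : |lam3 l - lam1 j| ≤ |lam3 l - lam2 k| + |lam2 k - lam1 j| := abs_sub_le _ _ _
    have t2 : dist (x1 j) (x3 l) ≤ dist (x1 j) (x2 k) + dist (x2 k) (x3 l) := dist_triangle _ _ _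
    linarith
  · have n1' : 0 ≤ matCost x1 lam1 x2 lam2 γ12 := matCost_nonneg h12 hn1
    have n2'' : 0 ≤ matCost x2' lam2' x3 lam3 γ23 := matCost_nonneg h23 hn2'
    linarith

end Comp

section HdistLemmas

variable [MetricSpace X]

lemma Hdist_bddBelow (μ1 μ2 : C(X, ℝ) → ℝ) :
    BddBelow {c : ℝ | ∃ (n1 n2 : ℕ) (x1 : Fin n1 → X) (lam1 : Fin n1 → ℝ)
      (x2 : Fin n2 → X) (lam2 : Fin n2 → ℝ) (γ : Fin n1 → Fin n2 → WithBot ℝ),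
      IsRepr μ1 x1 lam1 ∧ IsRepr μ2 x2 lam2 ∧ IsCouplingMatrix lam1 lam2 γ ∧
      c = matCost x1 lam1 x2 lam2 γ} := by
  refine ⟨0, ?_⟩
  rintro c ⟨n1, n2, x1, lam1, x2, lam2, γ, h1, h2, hγ, rfl⟩
  exact matCost_nonneg hγ h1.1

lemma Hdist_nonneg (μ1 μ2 : C(X, ℝ) → ℝ) : 0 ≤ Hdist μ1 μ2 := by
  apply Real.sInf_nonneg
  rintro c ⟨n1, n2, x1, lam1, x2, lam2, γ, h1, h2, hγ, rfl⟩
  exact matCost_nonneg hγ h1.1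

lemma Hdist_le {μ1 μ2 : C(X, ℝ) → ℝ} {n1 n2 : ℕ} {x1 : Fin n1 → X} {lam1 : Fin n1 → ℝ}
    {x2 : Fin n2 → X} {lam2 : Fin n2 → ℝ} {γ : Fin n1 → Fin n2 → WithBot ℝ}
    (h1 : IsRepr μ1 x1 lam1) (h2 : IsRepr μ2 x2 lam2) (hγ : IsCouplingMatrix lam1 lam2 γ) :
    Hdist μ1 μ2 ≤ matCost x1 lam1 x2 lam2 γ :=
  csInf_le (Hdist_bddBelow μ1 μ2) ⟨n1, n2, x1, lam1, x2, lam2, γ, h1, h2, hγ, rfl⟩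

lemma Hdist_set_nonempty {μ1 μ2 : C(X, ℝ) → ℝ}
    (h1 : IsFinSuppIPM μ1) (h2 : IsFinSuppIPM μ2) :
    {c : ℝ | ∃ (n1 n2 : ℕ) (x1 : Fin n1 → X) (lam1 : Fin n1 → ℝ)
      (x2 : Fin n2 → X) (lam2 : Fin n2 → ℝ) (γ : Fin n1 → Fin n2 → WithBot ℝ),
      IsRepr μ1 x1 lam1 ∧ IsRepr μ2 x2 lam2 ∧ IsCouplingMatrix lam1 lam2 γ ∧
      c = matCost x1 lam1 x2 lam2 γ}.Nonempty := by
  obtain ⟨n1, x1, lam1, hr1⟩ := h1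
  obtain ⟨n2, x2, lam2, hr2⟩ := h2
  exact ⟨_, n1, n2, x1, lam1, x2, lam2, _, hr1, hr2,
    isCouplingMatrix_prod hr1.1 hr2.1 hr1.2.2.1 hr2.2.2.1, rfl⟩

lemma Hdist_exists_lt {μ1 μ2 : C(X, ℝ) → ℝ}
    (h1 : IsFinSuppIPM μ1) (h2 : IsFinSuppIPM μ2) {t : ℝ} (ht : Hdist μ1 μ2 < t) :
    ∃ (n1 n2 : ℕ) (x1 : Fin n1 → X) (lam1 : Fin n1 → ℝ)
      (x2 : Fin n2 → X) (lam2 : Fin n2 → ℝ) (γ : Fin n1 → Fin n2 → WithBot ℝ),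
      IsRepr μ1 x1 lam1 ∧ IsRepr μ2 x2 lam2 ∧ IsCouplingMatrix lam1 lam2 γ ∧
      matCost x1 lam1 x2 lam2 γ < t := by
  by_contra hc
  push_neg at hc
  have : t ≤ Hdist μ1 μ2 := by
    apply le_csInf (Hdist_set_nonempty h1 h2)
    rintro c ⟨n1, n2, x1, lam1, x2, lam2, γ, hr1, hr2, hγ, rfl⟩
    exact hc n1 n2 x1 lam1 x2 lam2 γ hr1 hr2 hγ
  linarith

lemma Hdist_symm (μ1 μ2 : C(X, ℝ) → ℝ) : Hdist μ1 μ2 = Hdist μ2 μ1 := by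
  unfold Hdist
  congr 1
  ext c
  simp only [Set.mem_setOf_eq]
  constructor
  · rintro ⟨n1, n2, x1, lam1, x2, lam2, γ, h1, h2, hγ, rfl⟩
    exact ⟨n2, n1, x2, lam2, x1, lam1, fun k j => γ j k, h2, h1, ⟨hγ.2, hγ.1⟩,
      (matCost_transpose x1 lam1 x2 lam2 γ).symm⟩
  · rintro ⟨n2, n1, x2, lam2, x1, lam1, γ, h2, h1, hγ, rfl⟩
    exact ⟨n1, n2, x1, lam1, x2, lam2, fun k j => γ j k, h1, h2, ⟨hγ.2, hγ.1⟩,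
      (matCost_transpose x2 lam2 x1 lam1 γ).symm⟩

lemma Hdist_self {μ : C(X, ℝ) → ℝ} (h : IsFinSuppIPM μ) : Hdist μ μ = 0 := by
  obtain ⟨n, x, lam, hr⟩ := h
  refine le_antisymm ?_ (Hdist_nonneg μ μ)
  have := Hdist_le hr hr (isCouplingMatrix_diag lam)
  rwa [matCost_diag hr.1 x lam] at this

lemma Hdist_triangle {μ1 μ2 μ3 : C(X, ℝ) → ℝ}
    (h1 : IsFinSuppIPM μ1) (h2 : IsFinSuppIPM μ2) (h3 : IsFinSuppIPM μ3) :
    Hdist μ1 μ3 ≤ Hdist μ1 μ2 + Hdist μ2 μ3 := by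
  apply le_of_forall_pos_le_add
  intro ε hε
  obtain ⟨n1, n2, x1, lam1, x2, lam2, γ12, hr1, hr2, hc12, hm12⟩ :=
    Hdist_exists_lt h1 h2 (lt_add_of_pos_right _ (half_pos hε))
  obtain ⟨n2', n3, x2', lam2', x3, lam3, γ23, hr2', hr3, hc23, hm23⟩ :=
    Hdist_exists_lt h2 h3 (lt_add_of_pos_right _ (half_pos hε))
  obtain ⟨σ, hx, hl⟩ := hr2.exists_equiv hr2'
  have hcm := compMat_isCouplingMatrix σ hl hc12 hc23
  have hcost : matCost x1 lam1 x3 lam3 (compMat σ lam2 γ12 γ23)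
      ≤ matCost x1 lam1 x2 lam2 γ12 + matCost x2' lam2' x3 lam3 γ23 :=
    compMat_cost σ hx hl hc12 hc23 hr1.1 hr2'.1
  have hH := Hdist_le hr1 hr3 hcm
  linarith

end HdistLemmas

section Eq

variable [MetricSpace X]

lemma le_of_Hdist_nonpos [CompactSpace X] {μ1 μ2 : C(X, ℝ) → ℝ}
    (h1 : IsFinSuppIPM μ1) (h2 : IsFinSuppIPM μ2) (h : Hdist μ1 μ2 ≤ 0) (φ : C(X, ℝ)) :
    μ1 φ ≤ μ2 φ := by
  have hu : UniformContinuous (φ : X → ℝ) :=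
    CompactSpace.uniformContinuous_of_continuous φ.continuous
  apply le_of_forall_pos_le_add
  intro ε hε
  obtain ⟨δ, hδ, hδ'⟩ := Metric.uniformContinuous_iff.mp hu (ε / 2) (half_pos hε)
  have ht : Hdist μ1 μ2 < min δ (ε / 2) := lt_of_le_of_lt h (lt_min hδ (half_pos hε))
  obtain ⟨n1, n2, x1, lam1, x2, lam2, γ, hr1, hr2, hγ, hcost⟩ := Hdist_exists_lt h1 h2 ht
  haveI : Nonempty (Fin n1) := ⟨⟨0, hr1.1⟩⟩
  rw [hr1.2.2.2]
  apply ciSup_le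
  intro j
  obtain ⟨k, hk⟩ := hγ.exists_ne_bot_row j
  have hle := cost_le_matCost x1 lam1 x2 lam2 γ hk
  have habs : |lam2 k - lam1 j| < ε / 2 := by
    have hdn : (0 : ℝ) ≤ dist (x1 j) (x2 k) := dist_nonneg
    have := lt_of_lt_of_le hcost (min_le_right δ (ε / 2))
    linarith
  have hdist : dist (x1 j) (x2 k) < δ := by
    have := abs_nonneg (lam2 k - lam1 j)
    have := lt_of_lt_of_le hcost (min_le_left δ (ε / 2))
    linarith
  have hφ : |φ (x1 j) - φ (x2 k)| < ε / 2 := by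
    have := hδ' hdist
    rwa [Real.dist_eq] at this
  have hmu2 : lam2 k + φ (x2 k) ≤ μ2 φ := by
    rw [hr2.2.2.2]
    exact le_ciSup (Set.Finite.bddAbove (Set.finite_range fun k => lam2 k + φ (x2 k))) k
  have A := le_abs_self (lam1 j - lam2 k)
  have B : |lam1 j - lam2 k| = |lam2 k - lam1 j| := abs_sub_comm _ _
  have C := le_abs_self (φ (x1 j) - φ (x2 k))
  linarith

lemma eq_of_Hdist_nonpos [CompactSpace X] {μ1 μ2 : C(X, ℝ) → ℝ}
    (h1 : IsFinSuppIPM μ1) (h2 : IsFinSuppIPM μ2) (h : Hdist μ1 μ2 ≤ 0) : μ1 = μ2 := by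
  funext φ
  refine le_antisymm (le_of_Hdist_nonpos h1 h2 h φ) (le_of_Hdist_nonpos h2 h1 ?_ φ)
  rw [Hdist_symm]
  exact h

lemma eq_of_subsingleton {μ1 μ2 : C(X, ℝ) → ℝ} (hs : ∀ a b : X, a = b)
    (h1 : IsFinSuppIPM μ1) (h2 : IsFinSuppIPM μ2) : μ1 = μ2 := by
  obtain ⟨n1, x1, lam1, hr1⟩ := h1
  obtain ⟨n2, x2, lam2, hr2⟩ := h2
  funext φ
  rw [hr1.2.2.2, hr2.2.2.2]
  set p1 : Fin n1 := ⟨0, hr1.1⟩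
  set p2 : Fin n2 := ⟨0, hr2.1⟩
  have e1 : (fun i => lam1 i + φ (x1 i)) = fun i => lam1 i + φ (x1 p1) :=
    funext fun i => by rw [hs (x1 i) (x1 p1)]
  have e2 : (fun k => lam2 k + φ (x2 k)) = fun k => lam2 k + φ (x2 p2) :=
    funext fun k => by rw [hs (x2 k) (x2 p2)]
  rw [e1, e2, ciSup_add_const hr1.1, ciSup_add_const hr2.1, hr1.2.2.1, hr2.2.2.1,
    zero_add, zero_add, hs (x1 p1) (x2 p2)]

end Eq

theorem stmt9' [MetricSpace X] [CompactSpace X] :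
    (∀ μ1 μ2 : C(X, ℝ) → ℝ, IsFinSuppIPM μ1 → IsFinSuppIPM μ2 →
      0 ≤ rhoOmega μ1 μ2) ∧
    (∀ μ1 μ2 : C(X, ℝ) → ℝ, IsFinSuppIPM μ1 → IsFinSuppIPM μ2 →
      (rhoOmega μ1 μ2 = 0 ↔ μ1 = μ2)) ∧
    (∀ μ1 μ2 : C(X, ℝ) → ℝ, IsFinSuppIPM μ1 → IsFinSuppIPM μ2 →
      rhoOmega μ1 μ2 = rhoOmega μ2 μ1) ∧
    (∀ μ1 μ2 μ3 : C(X, ℝ) → ℝ, IsFinSuppIPM μ1 → IsFinSuppIPM μ2 → IsFinSuppIPM μ3 →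
      rhoOmega μ1 μ3 ≤ rhoOmega μ1 μ2 + rhoOmega μ2 μ3) := by
  have hnonneg : ∀ μ1 μ2 : C(X, ℝ) → ℝ, 0 ≤ rhoOmega μ1 μ2 := fun μ1 μ2 =>
    le_min Metric.diam_nonneg (Hdist_nonneg μ1 μ2)
  refine ⟨fun μ1 μ2 _ _ => hnonneg μ1 μ2, ?_, ?_, ?_⟩
  · intro μ1 μ2 h1 h2
    constructor
    · intro h
      unfold rhoOmega at h
      rcases min_eq_iff.mp h with ⟨hd, -⟩ | ⟨hH, -⟩
      · -- diam = 0 : X is subsingleton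
        have hb : EMetric.diam (Set.univ : Set X) ≠ ⊤ :=
          (isCompact_univ (X := X)).isBounded.ediam_ne_top
        have h0 : EMetric.diam (Set.univ : Set X) = 0 := by
          rcases (ENNReal.toReal_eq_zero_iff _).mp hd with h' | h'
          · exact h'
          · exact absurd h' hb
        have hsub := EMetric.diam_eq_zero_iff.mp h0
        exact eq_of_subsingleton (fun a b => hsub (Set.mem_univ a) (Set.mem_univ b)) h1 h2
      · exact eq_of_Hdist_nonpos h1 h2 hH.le
    · rintro rfl
      unfold rhoOmega
      rw [Hdist_self h1]
      exact min_eq_right Metric.diam_nonneg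
  · intro μ1 μ2 _ _
    unfold rhoOmega
    rw [Hdist_symm]
  · intro μ1 μ2 μ3 h1 h2 h3
    set d := Metric.diam (Set.univ : Set X)
    have hd : 0 ≤ d := Metric.diam_nonneg
    by_cases c12 : Hdist μ1 μ2 ≤ d
    · by_cases c23 : Hdist μ2 μ3 ≤ d
      · have e12 : rhoOmega μ1 μ2 = Hdist μ1 μ2 := min_eq_right c12
        have e23 : rhoOmega μ2 μ3 = Hdist μ2 μ3 := min_eq_right c23
        rw [e12, e23]
        calc rhoOmega μ1 μ3 ≤ Hdist μ1 μ3 := min_le_right _ _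
          _ ≤ Hdist μ1 μ2 + Hdist μ2 μ3 := Hdist_triangle h1 h2 h3
      · push_neg at c23
        have e23 : rhoOmega μ2 μ3 = d := min_eq_left c23.le
        have : rhoOmega μ1 μ3 ≤ d := min_le_left _ _
        have := hnonneg μ1 μ2
        linarith [e23 ▸ le_refl (rhoOmega μ2 μ3)]
    · push_neg at c12
      have e12 : rhoOmega μ1 μ2 = d := min_eq_left c12.le
      have hle : rhoOmega μ1 μ3 ≤ d := min_le_left _ _
      have := hnonneg μ2 μ3
      linarith [e12 ▸ le_refl (rhoOmega μ1 μ2)]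


/-- Corollary 1: `ρ_ω = min{diam X, H}` is a metric on the set of
finitely supported idempotent probability measures. -/
theorem stmt9 [MetricSpace X] [CompactSpace X] :
    (∀ μ1 μ2 : C(X, ℝ) → ℝ, IsFinSuppIPM μ1 → IsFinSuppIPM μ2 →
      0 ≤ rhoOmega μ1 μ2) ∧
    (∀ μ1 μ2 : C(X, ℝ) → ℝ, IsFinSuppIPM μ1 → IsFinSuppIPM μ2 →
      (rhoOmega μ1 μ2 = 0 ↔ μ1 = μ2)) ∧
    (∀ μ1 μ2 : C(X, ℝ) → ℝ, IsFinSuppIPM μ1 → IsFinSuppIPM μ2 →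
      rhoOmega μ1 μ2 = rhoOmega μ2 μ1) ∧
    (∀ μ1 μ2 μ3 : C(X, ℝ) → ℝ, IsFinSuppIPM μ1 → IsFinSuppIPM μ2 → IsFinSuppIPM μ3 →
      rhoOmega μ1 μ3 ≤ rhoOmega μ1 μ2 + rhoOmega μ2 μ3) := stmt9'
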